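/- Let 0 → Y → Z → X → 0 and 0 → Y → S → X → 0 be short exact sequences of Banach spaces with quotient maps ρ_z : Z → X and ρ_s : S → X. If the pull-back of the second sequence along ρ_z splits and the pull-back of the first sequence along ρ_s splits, then Y ⊕ S is isomorphic to Y ⊕ Z (the diagonal principle). -/

import Mathlib

open Set

/-- The pull-back of the sequence `0 → Y → S → X → 0` (with quotient map `ρs`) along an
operator `γ : Z → X`, as a closed subspace of `S × Z`. -/
noncomputable def pullBack {X S Z : Type*}
    [NormedAddCommGroup X] [NormedSpace ℝ X]
    [NormedAddCommGroup S] [NormedSpace ℝ S]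
    [NormedAddCommGroup Z] [NormedSpace ℝ Z]
    (ρs : S →L[ℝ] X) (γ : Z →L[ℝ] X) : Submodule ℝ (S × Z) :=
  LinearMap.ker (((ρs.comp (ContinuousLinearMap.fst ℝ S Z)) -
    (γ.comp (ContinuousLinearMap.snd ℝ S Z)) : S × Z →L[ℝ] X) : S × Z →ₗ[ℝ] X)

lemma mem_pullBack {X A B : Type*}
    [NormedAddCommGroup X] [NormedSpace ℝ X]
    [NormedAddCommGroup A] [NormedSpace ℝ A]
    [NormedAddCommGroup B] [NormedSpace ℝ B]
    (ρa : A →L[ℝ] X) (ρb : B →L[ℝ] X) {p : A × B} :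
    p ∈ pullBack ρa ρb ↔ ρa p.1 = ρb p.2 := by
  simp [pullBack, LinearMap.mem_ker, sub_eq_zero]

instance pbComplete {X A B : Type*}
    [NormedAddCommGroup X] [NormedSpace ℝ X]
    [NormedAddCommGroup A] [NormedSpace ℝ A] [CompleteSpace A]
    [NormedAddCommGroup B] [NormedSpace ℝ B] [CompleteSpace B]
    (ρa : A →L[ℝ] X) (ρb : B →L[ℝ] X) : CompleteSpace ↥(pullBack ρa ρb) :=
  (ContinuousLinearMap.isClosed_ker _).completeSpace_coe

noncomputable def pbEquiv {X Y A B : Type*}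
    [NormedAddCommGroup X] [NormedSpace ℝ X]
    [NormedAddCommGroup Y] [NormedSpace ℝ Y] [CompleteSpace Y]
    [NormedAddCommGroup A] [NormedSpace ℝ A] [CompleteSpace A]
    [NormedAddCommGroup B] [NormedSpace ℝ B] [CompleteSpace B]
    (ja : Y →L[ℝ] A) (ρa : A →L[ℝ] X) (ρb : B →L[ℝ] X)
    (hρa : Function.Surjective ρa)
    (hexa : ∀ a : A, ρa a = 0 ↔ ∃ y : Y, ja y = a)
    (P : ↥(pullBack ρa ρb) →L[ℝ] Y)
    (hP : ∀ (p : ↥(pullBack ρa ρb)) (y : Y), (p : A × B) = (ja y, 0) → P p = y) :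
    ↥(pullBack ρa ρb) ≃L[ℝ] Y × B := by
  set Φ : ↥(pullBack ρa ρb) →L[ℝ] Y × B :=
    P.prod ((ContinuousLinearMap.snd ℝ A B).comp (pullBack ρa ρb).subtypeL) with hΦ
  have hinj : Function.Injective Φ := by
    intro p q hpq
    have h1 : P p = P q ∧ (p : A × B).2 = (q : A × B).2 := by
      simpa [hΦ, Prod.ext_iff] using hpq
    -- consider p - q
    have hmem : ((p : A × B) - q) ∈ pullBack ρa ρb := sub_mem p.2 q.2
    have hz : ((p : A × B) - q).2 = 0 := by simp [h1.2]
    have hk : ρa ((p : A × B) - q).1 = 0 := by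
      have := (mem_pullBack ρa ρb).mp hmem
      rw [this, hz, map_zero]
    obtain ⟨y, hy⟩ := (hexa _).mp hk
    have hpq' : ((p - q : ↥(pullBack ρa ρb)) : A × B) = (ja y, 0) := by
      ext
      · simpa using hy.symm
      · simpa using hz
    have hy0 : P (p - q) = y := hP _ _ hpq'
    have : y = 0 := by rw [← hy0, map_sub, h1.1, sub_self]
    have : ((p - q : ↥(pullBack ρa ρb)) : A × B) = 0 := by
      rw [hpq', this]; simp
    have : p - q = 0 := Subtype.ext (by simpa using this)
    exact sub_eq_zero.mp this
  have hsurj : Function.Surjective Φ := by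
    rintro ⟨y, b⟩
    obtain ⟨a, ha⟩ := hρa (ρb b)
    have hm0 : (a, b) ∈ pullBack ρa ρb := (mem_pullBack ρa ρb).mpr ha
    set p0 : ↥(pullBack ρa ρb) := ⟨(a, b), hm0⟩ with hp0
    have hmq : ((ja (y - P p0), 0) : A × B) ∈ pullBack ρa ρb := by
      refine (mem_pullBack ρa ρb).mpr ?_
      have : ρa (ja (y - P p0)) = 0 := (hexa _).mpr ⟨_, rfl⟩
      show ρa (ja (y - P p0)) = ρb 0
      rw [this, map_zero]
    set q : ↥(pullBack ρa ρb) := ⟨(ja (y - P p0), 0), hmq⟩ with hq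
    have hPq : P q = y - P p0 := hP q (y - P p0) rfl
    refine ⟨p0 + q, ?_⟩
    have h1 : P (p0 + q) = y := by rw [map_add, hPq]; abel
    have h2 : ((p0 + q : ↥(pullBack ρa ρb)) : A × B).2 = b := by
      rw [Submodule.coe_add, hp0, hq]
      show b + 0 = b
      rw [add_zero]
    show (P (p0 + q), ((p0 + q : ↥(pullBack ρa ρb)) : A × B).2) = (y, b)
    rw [h1, h2]
  exact ContinuousLinearEquiv.ofBijective Φ
    (LinearMap.ker_eq_bot.mpr hinj) (LinearMap.range_eq_top.mpr hsurj)

noncomputable def pbSwap {X A B : Type*}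
    [NormedAddCommGroup X] [NormedSpace ℝ X]
    [NormedAddCommGroup A] [NormedSpace ℝ A]
    [NormedAddCommGroup B] [NormedSpace ℝ B]
    (ρa : A →L[ℝ] X) (ρb : B →L[ℝ] X) :
    ↥(pullBack ρa ρb) ≃L[ℝ] ↥(pullBack ρb ρa) where
  toLinearEquiv :=
  { toFun := fun p => ⟨((p : A × B).2, (p : A × B).1),
      (mem_pullBack ρb ρa).mpr ((mem_pullBack ρa ρb).mp p.2).symm⟩
    invFun := fun p => ⟨((p : B × A).2, (p : B × A).1),
      (mem_pullBack ρa ρb).mpr ((mem_pullBack ρb ρa).mp p.2).symm⟩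
    map_add' := fun p q => rfl
    map_smul' := fun c p => rfl
    left_inv := fun p => rfl
    right_inv := fun p => rfl }
  continuous_toFun := Continuous.subtype_mk
    ((continuous_snd.comp continuous_subtype_val).prodMk
      (continuous_fst.comp continuous_subtype_val)) _
  continuous_invFun := Continuous.subtype_mk
    ((continuous_snd.comp continuous_subtype_val).prodMk
      (continuous_fst.comp continuous_subtype_val)) _

theorem stmt6 {X Y Z S : Type*}
    [NormedAddCommGroup X] [NormedSpace ℝ X] [CompleteSpace X]
    [NormedAddCommGroup Y] [NormedSpace ℝ Y] [CompleteSpace Y]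
    [NormedAddCommGroup Z] [NormedSpace ℝ Z] [CompleteSpace Z]
    [NormedAddCommGroup S] [NormedSpace ℝ S] [CompleteSpace S]
    (jz : Y →L[ℝ] Z) (ρz : Z →L[ℝ] X)
    (js : Y →L[ℝ] S) (ρs : S →L[ℝ] X)
    (hjz : Function.Injective jz) (hρz : Function.Surjective ρz)
    (hexz : ∀ z : Z, ρz z = 0 ↔ ∃ y : Y, jz y = z)
    (hjs : Function.Injective js) (hρs : Function.Surjective ρs)
    (hexs : ∀ s : S, ρs s = 0 ↔ ∃ y : Y, js y = s)
    -- the pull-back of the `S`-sequence along `ρz` splits: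
    (hsplit₁ : ∃ P : ↥(pullBack ρs ρz) →L[ℝ] Y,
      ∀ (p : ↥(pullBack ρs ρz)) (y : Y), (p : S × Z) = (js y, 0) → P p = y)
    -- the pull-back of the `Z`-sequence along `ρs` splits:
    (hsplit₂ : ∃ P : ↥(pullBack ρz ρs) →L[ℝ] Y,
      ∀ (p : ↥(pullBack ρz ρs)) (y : Y), (p : Z × S) = (jz y, 0) → P p = y) :
    Nonempty ((Y × S) ≃L[ℝ] (Y × Z)) := by
  obtain ⟨P₁, hP₁⟩ := hsplit₁
  obtain ⟨P₂, hP₂⟩ := hsplit₂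
  have e₁ : ↥(pullBack ρs ρz) ≃L[ℝ] Y × Z := pbEquiv js ρs ρz hρs hexs P₁ hP₁
  have e₂ : ↥(pullBack ρz ρs) ≃L[ℝ] Y × S := pbEquiv jz ρz ρs hρz hexz P₂ hP₂
  exact ⟨e₂.symm.trans ((pbSwap ρz ρs).trans e₁)⟩
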